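/- If R ∈ A⊗A⊗A satisfies R¹⊗aR²⊗R³ = R¹⊗R²⊗R³a for all a ∈ A, R¹R²⊗R³ = 1⊗1 and R²⊗R³R¹ = 1⊗1, then R is invertible in the algebra A⊗A⊗A, with inverse R²⊗R¹⊗R³ (i.e. r²R¹⊗r¹R²⊗r³R³ = 1⊗1⊗1 = R¹r²⊗R²r¹⊗R³r³, where r is a second copy of R). -/

import Mathlib

open TensorProduct

section Aux

variable (k A : Type*) [CommRing k] [Ring A] [Algebra k A]

/-- `u ⊗ (v ⊗ w) ↦ v ⊗ (w * u)`. -/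
noncomputable def cycMul : (A ⊗[k] A) ⊗[k] A →ₗ[k] A ⊗[k] A :=
  (TensorProduct.map LinearMap.id (LinearMap.mul' k A)) ∘ₗ
    (TensorProduct.assoc k A A A).toLinearMap ∘ₗ
    (TensorProduct.comm k A (A ⊗[k] A)).toLinearMap ∘ₗ
    (TensorProduct.assoc k A A A).toLinearMap

@[simp] lemma cycMul_tmul (u v w : A) :
    cycMul k A ((u ⊗ₜ[k] v) ⊗ₜ[k] w) = v ⊗ₜ[k] (w * u) := rfl

/-- `u ⊗ (v ⊗ w) ↦ v ⊗ (u ⊗ w)`. -/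
noncomputable def swap12 : (A ⊗[k] A) ⊗[k] A →ₗ[k] (A ⊗[k] A) ⊗[k] A :=
    (TensorProduct.map (TensorProduct.comm k A A).toLinearMap LinearMap.id)

@[simp] lemma swap12_tmul (u v w : A) :
    swap12 k A ((u ⊗ₜ[k] v) ⊗ₜ[k] w) = (v ⊗ₜ[k] u) ⊗ₜ[k] w := rfl

end Aux

/-- If `R ∈ A ⊗ A ⊗ A` satisfies `R¹ ⊗ aR² ⊗ R³ = R¹ ⊗ R² ⊗ R³a` for all
`a ∈ A`, `R¹R² ⊗ R³ = 1 ⊗ 1` and `R² ⊗ R³R¹ = 1 ⊗ 1`, then `R` is invertible in the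
algebra `A ⊗ A ⊗ A` with inverse `R² ⊗ R¹ ⊗ R³`, i.e.
`r²R¹ ⊗ r¹R² ⊗ r³R³ = 1 ⊗ 1 ⊗ 1 = R¹r² ⊗ R²r¹ ⊗ R³r³` where `r` is a second copy of
`R`; the products are taken in the componentwise algebra structure of `A ⊗ A ⊗ A`. -/
theorem R_matrix_invertible_with_inverse_flip
    (k A : Type*) [CommRing k] [Ring A] [Algebra k A]
    (ι : Type*) (s : Finset ι) (x y z : ι → A)
    (hcen : ∀ a : A,
      ∑ i ∈ s, x i ⊗ₜ[k] (a * y i) ⊗ₜ[k] z i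
        = ∑ i ∈ s, x i ⊗ₜ[k] y i ⊗ₜ[k] (z i * a))
    (hnorm1 : ∑ i ∈ s, (x i * y i) ⊗ₜ[k] z i = (1 : A) ⊗ₜ[k] (1 : A))
    (hnorm2 : ∑ i ∈ s, y i ⊗ₜ[k] (z i * x i) = (1 : A) ⊗ₜ[k] (1 : A)) :
    ((∑ j ∈ s, y j ⊗ₜ[k] x j ⊗ₜ[k] z j) * (∑ i ∈ s, x i ⊗ₜ[k] y i ⊗ₜ[k] z i)
        = (1 : A ⊗[k] A ⊗[k] A)) ∧
    ((∑ i ∈ s, x i ⊗ₜ[k] y i ⊗ₜ[k] z i) * (∑ j ∈ s, y j ⊗ₜ[k] x j ⊗ₜ[k] z j)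
        = (1 : A ⊗[k] A ⊗[k] A)) := by
  classical
  -- The key derived identity (★): `∑ y i ⊗ (z i * (a * x i)) = a ⊗ 1`.
  have star : ∀ a : A, ∑ i ∈ s, y i ⊗ₜ[k] (z i * (a * x i)) = a ⊗ₜ[k] (1 : A) := by
    intro a
    have h1 := congrArg (⇑(cycMul k A)) (hcen a)
    simp only [map_sum, cycMul_tmul, mul_assoc] at h1
    -- h1 : ∑ (a * y i) ⊗ (z i * x i) = ∑ y i ⊗ (z i * (a * x i))
    have h2 := congrArg
      (⇑(TensorProduct.map (LinearMap.mulLeft k a) (LinearMap.id (R := k) (M := A))))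
      hnorm2
    simp only [map_sum, TensorProduct.map_tmul, LinearMap.mulLeft_apply,
      LinearMap.id_coe, id_eq, mul_one] at h2
    -- h2 : ∑ (a * y i) ⊗ (z i * x i) = a ⊗ 1
    rw [← h1, h2]
  -- swapped form of hnorm2
  have hnorm2' : ∑ i ∈ s, (z i * x i) ⊗ₜ[k] y i = (1 : A) ⊗ₜ[k] (1 : A) := by
    have := congrArg (⇑(TensorProduct.comm k A A)) hnorm2
    simpa only [map_sum, TensorProduct.comm_tmul] using this
  constructor
  · -- S * R = 1
    rw [Finset.sum_mul_sum]
    have step1 : ∀ j ∈ s,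
        ∑ i ∈ s, (y j ⊗ₜ[k] x j ⊗ₜ[k] z j) * (x i ⊗ₜ[k] y i ⊗ₜ[k] z i)
          = ∑ i ∈ s, (y j * x i) ⊗ₜ[k] y i ⊗ₜ[k] (z j * (z i * x j)) := by
      intro j _
      have h := congrArg
        (⇑(TensorProduct.map (TensorProduct.map (LinearMap.mulLeft k (y j))
              (LinearMap.id (R := k) (M := A)))
              (LinearMap.mulLeft k (z j))))
        (hcen (x j))
      simp only [map_sum, TensorProduct.map_tmul, LinearMap.mulLeft_apply,
        LinearMap.id_coe, id_eq] at h
      simpa only [Algebra.TensorProduct.tmul_mul_tmul] using h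
    rw [Finset.sum_congr rfl step1, Finset.sum_comm]
    have step2 : ∀ i ∈ s,
        ∑ j ∈ s, (y j * x i) ⊗ₜ[k] y i ⊗ₜ[k] (z j * (z i * x j))
          = (z i * x i) ⊗ₜ[k] y i ⊗ₜ[k] (1 : A) := by
      intro i _
      have h := congrArg
        (⇑(TensorProduct.map ((TensorProduct.mk k A A).flip (y i) ∘ₗ
              LinearMap.mulRight k (x i))
            (LinearMap.id (R := k) (M := A))))
        (star (z i))
      simpa only [map_sum, TensorProduct.map_tmul, LinearMap.mulRight_apply,
        LinearMap.coe_comp, Function.comp_apply, LinearMap.flip_apply,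
        LinearMap.id_coe, id_eq, TensorProduct.mk_apply] using h
    rw [Finset.sum_congr rfl step2]
    have h := congrArg
      (⇑((TensorProduct.mk k (A ⊗[k] A) A).flip (1 : A)))
      hnorm2'
    simpa only [map_sum, TensorProduct.map_tmul, LinearMap.id_coe, id_eq,
      LinearMap.flip_apply, TensorProduct.mk_apply,
      Algebra.TensorProduct.one_def] using h
  · -- R * S = 1
    rw [Finset.sum_mul_sum]
    have step1 : ∀ i ∈ s,
        ∑ j ∈ s, (x i ⊗ₜ[k] y i ⊗ₜ[k] z i) * (y j ⊗ₜ[k] x j ⊗ₜ[k] z j)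
          = ∑ j ∈ s, y j ⊗ₜ[k] (y i * x j) ⊗ₜ[k] (z i * (z j * x i)) := by
      intro i _
      have h := congrArg
        (⇑((TensorProduct.map (TensorProduct.map (LinearMap.id (R := k) (M := A))
                (LinearMap.mulLeft k (y i)))
                (LinearMap.mulLeft k (z i))) ∘ₗ (swap12 k A)))
        (hcen (x i))
      simp only [map_sum, LinearMap.coe_comp, Function.comp_apply, swap12_tmul,
        TensorProduct.map_tmul, LinearMap.mulLeft_apply,
        LinearMap.id_coe, id_eq] at h
      simpa only [Algebra.TensorProduct.tmul_mul_tmul] using h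
    rw [Finset.sum_congr rfl step1, Finset.sum_comm]
    have step2 : ∀ j ∈ s,
        ∑ i ∈ s, y j ⊗ₜ[k] (y i * x j) ⊗ₜ[k] (z i * (z j * x i))
          = y j ⊗ₜ[k] (z j * x j) ⊗ₜ[k] (1 : A) := by
      intro j _
      have h := congrArg
        (⇑(TensorProduct.map ((TensorProduct.mk k A A (y j)) ∘ₗ
              LinearMap.mulRight k (x j))
              (LinearMap.id (R := k) (M := A))))
        (star (z j))
      simpa only [map_sum, LinearMap.coe_comp, Function.comp_apply,
        TensorProduct.map_tmul, LinearMap.mulRight_apply, LinearMap.id_coe, id_eq,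
        TensorProduct.mk_apply] using h
    rw [Finset.sum_congr rfl step2]
    have h := congrArg
      (⇑((TensorProduct.mk k (A ⊗[k] A) A).flip (1 : A)))
      hnorm2
    simpa only [map_sum, TensorProduct.map_tmul, LinearMap.id_coe, id_eq,
      LinearMap.flip_apply, TensorProduct.mk_apply,
      Algebra.TensorProduct.one_def] using h
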